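/- If (a, f) solves the Bryant soliton ODEs with initial behavior a(0)=0, a'(0)=1, f'(0)=0, and α > 0 (i.e., a(r) = r + αr³ + ..., f'(r) = 12αr + ...), then a' > 1 and f' > 0 on some interval (0, δ), and the solution cannot extend to a nonsingular solution on all of [0, ∞) with a > 0 and bounded curvature; in contrast, only α < 0 yields solutions defined on all of [0, ∞). -/

import Mathlib

open Set Filter Asymptotics


lemma contDiff_deriv {u : ℝ → ℝ} (hu : ContDiff ℝ (⊤:ℕ∞) u) : ContDiff ℝ (⊤:ℕ∞) (deriv u) :=
  (contDiff_infty_iff_deriv.mp hu).2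

lemma pow_littleO {m n : ℕ} (h : n < m) : (fun r : ℝ => r ^ m) =o[nhds (0:ℝ)] fun r => r ^ n := by
  rw [isLittleO_iff]
  intro ε hε
  have hev : ∀ᶠ r : ℝ in nhds 0, |r| < min 1 ε := by
    have : Tendsto (fun r : ℝ => |r|) (nhds 0) (nhds 0) := by
      simpa using continuous_abs.tendsto (0:ℝ)
    exact this.eventually_lt_const (by positivity)
  filter_upwards [hev] with r hr
  have hr1 : |r| ≤ 1 := le_of_lt (lt_of_lt_of_le hr (min_le_left _ _))
  have hrε : |r| ≤ ε := le_of_lt (lt_of_lt_of_le hr (min_le_right _ _))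
  have h1 : ‖r ^ m‖ = |r| ^ m := by simp [abs_pow]
  have h2 : ‖r ^ n‖ = |r| ^ n := by simp [abs_pow]
  rw [h1, h2]
  calc |r| ^ m = |r| ^ (m - n - 1) * |r| * |r| ^ n := by
        rw [mul_assoc, ← pow_succ', ← pow_add]; congr 1; omega
    _ ≤ 1 * ε * |r| ^ n := by
        have h3 : |r| ^ (m - n - 1) ≤ 1 := pow_le_one₀ (abs_nonneg r) hr1
        have h4 : (0:ℝ) ≤ |r| ^ n := by positivity
        have h5 : |r| ^ (m - n - 1) * |r| ≤ 1 * ε :=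
          mul_le_mul h3 hrε (abs_nonneg r) zero_le_one
        nlinarith
    _ = ε * |r| ^ n := by ring

lemma littleO_antideriv {v : ℝ → ℝ} {k : ℕ}
    (hv : Differentiable ℝ v) (hv0 : v 0 = 0)
    (h : (deriv v) =o[nhds (0:ℝ)] fun r => r ^ k) :
    v =o[nhds (0:ℝ)] fun r => r ^ (k + 1) := by
  rw [isLittleO_iff] at h ⊢
  intro ε hε
  rcases Metric.eventually_nhds_iff.mp (h hε) with ⟨δ, hδ, H⟩
  rw [Metric.eventually_nhds_iff]
  refine ⟨δ, hδ, fun r hr => ?_⟩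
  have habs : ∀ x ∈ uIcc (0:ℝ) r, |x| ≤ |r| := by
    intro x hx
    rcases Set.mem_uIcc.mp hx with ⟨h1, h2⟩ | ⟨h1, h2⟩
    · rw [abs_of_nonneg h1]
      exact le_trans h2 (le_abs_self r)
    · rw [abs_of_nonpos h2]
      calc -x ≤ -r := by linarith
        _ ≤ |r| := neg_le_abs r
  have key := Convex.norm_image_sub_le_of_norm_hasDerivWithin_le
    (f := v) (f' := deriv v) (s := uIcc (0:ℝ) r) (C := ε * |r| ^ k)
    (fun x _ => (hv x).hasDerivAt.hasDerivWithinAt)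
    (fun x hx => by
      have hd : dist x 0 < δ := by
        rw [Real.dist_eq, sub_zero]
        exact lt_of_le_of_lt (habs x hx) (by rwa [Real.dist_eq, sub_zero] at hr)
      calc ‖deriv v x‖ ≤ ε * ‖x ^ k‖ := H hd
        _ = ε * |x| ^ k := by simp [abs_pow]
        _ ≤ ε * |r| ^ k := by
            have := pow_le_pow_left₀ (abs_nonneg x) (habs x hx) k
            nlinarith [abs_nonneg x, abs_nonneg r])
    (convex_uIcc 0 r) (left_mem_uIcc) (right_mem_uIcc)
  calc ‖v r‖ = ‖v r - v 0‖ := by rw [hv0, sub_zero]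
    _ ≤ ε * |r| ^ k * ‖r - 0‖ := key
    _ = ε * ‖r ^ (k+1)‖ := by
        rw [sub_zero]
        rw [Real.norm_eq_abs, Real.norm_eq_abs, abs_pow, pow_succ]
        ring



lemma coeff_eq_zero {c : ℝ} {n : ℕ}
    (h : (fun r : ℝ => c * r ^ n) =o[nhds (0:ℝ)] fun r => r ^ n) : c = 0 := by
  by_contra hc
  have hc2 : (0:ℝ) < |c| / 2 := by positivity
  have h1 := isLittleO_iff.mp h hc2
  have h2 : ∀ᶠ r in nhdsWithin (0:ℝ) {(0:ℝ)}ᶜ,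
      ‖c * r ^ n‖ ≤ |c| / 2 * ‖r ^ n‖ ∧ r ≠ 0 :=
    (h1.filter_mono nhdsWithin_le_nhds).and eventually_mem_nhdsWithin
  obtain ⟨r, hr, hr0⟩ := h2.exists
  have hrn : (0:ℝ) < |r| ^ n := by positivity
  rw [norm_mul, Real.norm_eq_abs, Real.norm_eq_abs, abs_pow] at hr
  nlinarith [abs_pos.mpr hc]

/-- Local structure: for β > 0, `u = r + βr³ + O(r⁵)` smooth implies
`u' > 1` and `u'' > 0` on a right neighborhood of 0. -/
lemma localS1 {u : ℝ → ℝ} {β : ℝ} (hβ : 0 < β) (hu : ContDiff ℝ (⊤:ℕ∞) u)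
    (hO : (fun r => u r - (r + β * r ^ 3)) =O[nhds (0:ℝ)] fun r => r ^ 5) :
    ∃ δ > 0, ∀ r ∈ Ioo (0:ℝ) δ, 1 < deriv u r ∧ 0 < deriv (deriv u) r := by
  have hud : Differentiable ℝ u := hu.differentiable (by simp)
  have hu1 : ContDiff ℝ (⊤:ℕ∞) (deriv u) := (contDiff_infty_iff_deriv.mp hu).2
  have hu1d : Differentiable ℝ (deriv u) := hu1.differentiable (by simp)
  have hu2 : ContDiff ℝ (⊤:ℕ∞) (deriv (deriv u)) := (contDiff_infty_iff_deriv.mp hu1).2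
  have hu2d : Differentiable ℝ (deriv (deriv u)) := hu2.differentiable (by simp)
  set u1 := deriv u with hu1def
  set u2 := deriv u1 with hu2def
  set u3 := deriv u2 with hu3def
  -- u 0 = 0
  have hu0 : u 0 = 0 := by
    have t1 : Tendsto (fun r => u r - (r + β * r ^ 3)) (nhds 0) (nhds (u 0)) := by
      have : Tendsto u (nhds 0) (nhds (u 0)) := hud.continuous.tendsto 0
      have t2 : Tendsto (fun r : ℝ => r + β * r ^ 3) (nhds 0) (nhds 0) := by
        have : Continuous (fun r : ℝ => r + β * r ^ 3) := by continuity
        simpa using this.tendsto 0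
      simpa using this.sub t2
    have t3 : Tendsto (fun r => u r - (r + β * r ^ 3)) (nhds 0) (nhds 0) := by
      apply hO.trans_tendsto
      have : Continuous (fun r : ℝ => r ^ 5) := by continuity
      simpa using this.tendsto 0
    exact tendsto_nhds_unique t1 t3
  -- u' 0 = 1
  have hp : HasDerivAt (fun r : ℝ => r + β * r ^ 3) 1 0 := by
    have h1 : HasDerivAt (fun r : ℝ => r + β * r ^ 3) (1 + β * (3 * 0 ^ 2)) 0 :=
      (hasDerivAt_id 0).add ((hasDerivAt_pow 3 (0:ℝ)).const_mul β)
    simpa using h1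
  have hφlittle : (fun r => u r - (r + β * r ^ 3)) =o[nhds (0:ℝ)] fun r => r :=
    hO.trans_isLittleO (by simpa using pow_littleO (m := 5) (n := 1) (by norm_num))
  have hφder : HasDerivAt (fun r => u r - (r + β * r ^ 3)) 0 0 := by
    rw [hasDerivAt_iff_isLittleO]
    simpa [hu0] using hφlittle
  have hu10 : u1 0 = 1 := by
    have : HasDerivAt u (0 + 1) 0 := by
      have h := hφder.fun_add hp
      have e : (fun r => u r - (r + β * r ^ 3) + (r + β * r ^ 3)) = u := by funext r; ring
      rw [e] at h
      exact h
    simpa using this.deriv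
  -- Taylor coefficients
  set c2 := u2 0 with hc2def
  set c3 := u3 0 with hc3def
  have q3 : (fun r => u2 r - (c2 + c3 * r)) =o[nhds (0:ℝ)] fun r => r ^ 1 := by
    have hd3 : HasDerivAt u2 c3 0 := (hu2d 0).hasDerivAt
    rw [hasDerivAt_iff_isLittleO] at hd3
    have : (fun r : ℝ => u2 r - u2 0 - (r - 0) • c3) = fun r => u2 r - (c2 + c3 * r) := by
      funext r; simp [smul_eq_mul]; ring
    rw [this] at hd3
    simpa [pow_one] using hd3
  -- first antiderivative
  set v1 : ℝ → ℝ := fun r => u1 r - (1 + c2 * r + c3 * (r ^ 2 / 2)) with hv1def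
  have hv1has : ∀ r, HasDerivAt v1 (u2 r - (c2 + c3 * r)) r := by
    intro r
    have hpoly : HasDerivAt (fun r : ℝ => 1 + c2 * r + c3 * (r ^ 2 / 2)) (c2 + c3 * r) r := by
      have h1 : HasDerivAt (fun r : ℝ => 1 + c2 * r + c3 * (r ^ 2 / 2))
          (0 + c2 * 1 + c3 / 2 * (2 * r ^ 1)) r := by
        refine HasDerivAt.add (HasDerivAt.add (hasDerivAt_const r 1) ?_) ?_
        · exact (hasDerivAt_id r).const_mul c2
        · have h2 : HasDerivAt (fun r : ℝ => c3 / 2 * r ^ 2) (c3 / 2 * (↑2 * r ^ 1)) r :=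
            (hasDerivAt_pow 2 r).const_mul (c3 / 2)
          have h3 : (fun r : ℝ => c3 / 2 * r ^ 2) = fun r : ℝ => c3 * (r ^ 2 / 2) := by
            funext x; ring
          rw [← h3]
          exact_mod_cast h2
      convert h1 using 1; push_cast; ring
    exact ((hu1d r).hasDerivAt).sub hpoly
  have hv1diff : Differentiable ℝ v1 := fun r => (hv1has r).differentiableAt
  have hv10 : v1 0 = 0 := by simp [hv1def, hu10]
  have hv1o : v1 =o[nhds (0:ℝ)] fun r => r ^ 2 := by
    have hdv1 : deriv v1 = fun r => u2 r - (c2 + c3 * r) := funext fun r => (hv1has r).deriv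
    have := littleO_antideriv (k := 1) hv1diff hv10 (by rw [hdv1]; exact q3)
    exact this
  -- second antiderivative
  set v0 : ℝ → ℝ := fun r => u r - (r + c2 * (r ^ 2 / 2) + c3 * (r ^ 3 / 6)) with hv0def
  have hv0has : ∀ r, HasDerivAt v0 (v1 r) r := by
    intro r
    have hpoly : HasDerivAt (fun r : ℝ => r + c2 * (r ^ 2 / 2) + c3 * (r ^ 3 / 6))
        (1 + c2 * r + c3 * (r ^ 2 / 2)) r := by
      have h1 : HasDerivAt (fun r : ℝ => r + c2 / 2 * r ^ 2 + c3 / 6 * r ^ 3)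
          (1 + c2 / 2 * (↑2 * r ^ 1) + c3 / 6 * (↑3 * r ^ 2)) r := by
        refine HasDerivAt.add (HasDerivAt.add (hasDerivAt_id r) ?_) ?_
        · exact (hasDerivAt_pow 2 r).const_mul (c2 / 2)
        · exact (hasDerivAt_pow 3 r).const_mul (c3 / 6)
      have h3 : (fun r : ℝ => r + c2 / 2 * r ^ 2 + c3 / 6 * r ^ 3)
          = fun r : ℝ => r + c2 * (r ^ 2 / 2) + c3 * (r ^ 3 / 6) := by
        funext x; ring
      rw [h3] at h1
      convert h1 using 1; push_cast; ring
    exact ((hud r).hasDerivAt).sub hpoly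
  have hv0diff : Differentiable ℝ v0 := fun r => (hv0has r).differentiableAt
  have hv00 : v0 0 = 0 := by simp [hv0def, hu0]
  have hv0o : v0 =o[nhds (0:ℝ)] fun r => r ^ 3 := by
    have hdv0 : deriv v0 = v1 := funext fun r => (hv0has r).deriv
    exact littleO_antideriv (k := 2) hv0diff hv00 (by rw [hdv0]; exact hv1o)
  -- compare with the hypothesis expansion
  have hrem : (fun r => u r - (r + β * r ^ 3)) =o[nhds (0:ℝ)] fun r => r ^ 3 :=
    hO.trans_isLittleO (pow_littleO (by norm_num))
  have hq : (fun r : ℝ => c2 * (r ^ 2 / 2) + (c3 / 6 - β) * r ^ 3) =o[nhds (0:ℝ)]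
      fun r => r ^ 3 := by
    have := hrem.sub hv0o
    have heq : (fun r => (u r - (r + β * r ^ 3)) - v0 r)
        = fun r : ℝ => c2 * (r ^ 2 / 2) + (c3 / 6 - β) * r ^ 3 := by
      funext r; simp only [hv0def]; ring
    rwa [heq] at this
  have hc2_0 : c2 = 0 := by
    have hq2 : (fun r : ℝ => c2 * (r ^ 2 / 2) + (c3 / 6 - β) * r ^ 3) =o[nhds (0:ℝ)]
        fun r => r ^ 2 := hq.trans_isBigO (pow_littleO (by norm_num)).isBigO
    have hcube : (fun r : ℝ => (c3 / 6 - β) * r ^ 3) =o[nhds (0:ℝ)] fun r => r ^ 2 :=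
      (pow_littleO (by norm_num)).const_mul_left _
    have hsq : (fun r : ℝ => c2 / 2 * r ^ 2) =o[nhds (0:ℝ)] fun r => r ^ 2 := by
      have := hq2.sub hcube
      have heq : (fun r : ℝ => (c2 * (r ^ 2 / 2) + (c3 / 6 - β) * r ^ 3)
          - (c3 / 6 - β) * r ^ 3) = fun r : ℝ => c2 / 2 * r ^ 2 := by
        funext r; ring
      rwa [heq] at this
    have := coeff_eq_zero hsq
    linarith
  have hc3_6β : c3 = 6 * β := by
    have hq3 : (fun r : ℝ => (c3 / 6 - β) * r ^ 3) =o[nhds (0:ℝ)] fun r => r ^ 3 := by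
      have heq : (fun r : ℝ => c2 * (r ^ 2 / 2) + (c3 / 6 - β) * r ^ 3)
          = fun r : ℝ => (c3 / 6 - β) * r ^ 3 := by
        funext r; rw [hc2_0]; ring
      rwa [heq] at hq
    have := coeff_eq_zero hq3
    linarith
  -- extract positivity
  have hA : (fun r => u2 r - 6 * β * r) =o[nhds (0:ℝ)] fun r => r ^ 1 := by
    have heq : (fun r => u2 r - (c2 + c3 * r)) = fun r => u2 r - 6 * β * r := by
      funext r; rw [hc2_0, hc3_6β]; ring
    rwa [heq] at q3
  have hB : (fun r => u1 r - (1 + 3 * β * r ^ 2)) =o[nhds (0:ℝ)] fun r => r ^ 2 := by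
    have heq : v1 = fun r => u1 r - (1 + 3 * β * r ^ 2) := by
      funext r; simp only [hv1def]; rw [hc2_0, hc3_6β]; ring
    rwa [heq] at hv1o
  have evA := isLittleO_iff.mp hA (show (0:ℝ) < 3 * β by positivity)
  have evB := isLittleO_iff.mp hB (show (0:ℝ) < β by positivity)
  rcases Metric.eventually_nhds_iff.mp (evA.and evB) with ⟨δ, hδ, H⟩
  refine ⟨δ, hδ, fun r hr => ?_⟩
  obtain ⟨hr0, hrδ⟩ := hr
  have hdist : dist r 0 < δ := by rw [Real.dist_eq, sub_zero, abs_of_pos hr0]; exact hrδ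
  obtain ⟨HA, HB⟩ := H hdist
  rw [Real.norm_eq_abs, Real.norm_eq_abs] at HA HB
  have hrabs : |r| = r := abs_of_pos hr0
  rw [abs_pow, hrabs] at HA HB
  constructor
  · have h1 := (abs_le.mp HB).1
    nlinarith [mul_pos hβ (pow_pos hr0 2)]
  · have h1 := (abs_le.mp HA).1
    nlinarith [mul_pos hβ hr0]




lemma mono_Ici {F F' : ℝ → ℝ} {s : ℝ} (hs : 0 < s)
    (hF : ∀ x, s / 2 < x → HasDerivAt F (F' x) x)
    (h0 : ∀ x, s ≤ x → 0 ≤ F' x) : MonotoneOn F (Ici s) := by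
  apply monotoneOn_of_deriv_nonneg (convex_Ici s)
  · intro x hx
    exact (hF x (by simp only [mem_Ici] at hx; linarith)).continuousAt.continuousWithinAt
  · intro x hx
    rw [interior_Ici] at hx
    exact (hF x (by simp only [mem_Ioi] at hx; linarith)).differentiableAt.differentiableWithinAt
  · intro x hx
    rw [interior_Ici] at hx
    rw [(hF x (by simp only [mem_Ioi] at hx; linarith)).deriv]
    exact h0 x (le_of_lt hx)

lemma engine {b g : ℝ → ℝ} (hb : ContDiff ℝ (⊤:ℕ∞) b) (hg : ContDiff ℝ (⊤:ℕ∞) g)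
    {δ : ℝ} (hδ : 0 < δ)
    (hS1 : ∀ r ∈ Ioo (0:ℝ) δ, 1 < deriv b r ∧ 0 < deriv (deriv b) r)
    (hODE : ∀ r > (0:ℝ), 0 < b r ∧
      deriv (deriv g) r = 2 * deriv (deriv b) r / b r ∧
      deriv (deriv b) r = deriv g r * deriv b r + (1 - (deriv b r)^2) / b r)
    (hcurv : ∃ C : ℝ, ∀ r > (0:ℝ), |deriv (deriv b) r / b r| ≤ C ∧
      |(1 - (deriv b r)^2) / (b r)^2| ≤ C) : False := by
  obtain ⟨C, hC⟩ := hcurv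
  have hC0 : 0 ≤ C := le_trans (abs_nonneg _) (hC 1 one_pos).2
  have hbd : Differentiable ℝ b := hb.differentiable (by simp)
  have hBc : ContDiff ℝ (⊤:ℕ∞) (deriv b) := (contDiff_infty_iff_deriv.mp hb).2
  have hBd : Differentiable ℝ (deriv b) := hBc.differentiable (by simp)
  have hB2c : ContDiff ℝ (⊤:ℕ∞) (deriv (deriv b)) := (contDiff_infty_iff_deriv.mp hBc).2
  have hB2d : Differentiable ℝ (deriv (deriv b)) := hB2c.differentiable (by simp)
  have hgd : Differentiable ℝ g := hg.differentiable (by simp)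
  have hGc : ContDiff ℝ (⊤:ℕ∞) (deriv g) := (contDiff_infty_iff_deriv.mp hg).2
  have hGd : Differentiable ℝ (deriv g) := hGc.differentiable (by simp)
  set B := deriv b with hBdef
  set B2 := deriv B with hB2def
  set G := deriv g with hGdef
  set G2 := deriv G with hG2def
  have hbH : ∀ r, HasDerivAt b (B r) r := fun r => (hbd r).hasDerivAt
  have hBH : ∀ r, HasDerivAt B (B2 r) r := fun r => (hBd r).hasDerivAt
  have hGH : ∀ r, HasDerivAt G (G2 r) r := fun r => (hGd r).hasDerivAt
  -- Step E1: b'' > 0 on (0, ∞)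
  have hB2pos : ∀ r, 0 < r → 0 < B2 r := by
    by_contra hcon
    push_neg at hcon
    obtain ⟨r, hr0, hrle⟩ := hcon
    set T := {x : ℝ | δ/2 ≤ x} ∩ {x : ℝ | B2 x ≤ 0} with hTdef
    have hrT : r ∈ T := by
      constructor
      · simp only [mem_setOf_eq]
        by_contra hlt
        push_neg at hlt
        exact absurd hrle (not_le.mpr (hS1 r ⟨hr0, by linarith⟩).2)
      · exact hrle
    have hTclosed : IsClosed T :=
      IsClosed.inter (isClosed_le continuous_const continuous_id)
        (isClosed_le hB2c.continuous continuous_const)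
    have hbdd : BddBelow T := ⟨δ/2, fun x hx => hx.1⟩
    set r0 := sInf T with hr0def
    have hr0T : r0 ∈ T := hTclosed.csInf_mem ⟨r, hrT⟩ hbdd
    have hr0pos : 0 < r0 := lt_of_lt_of_le (by linarith) hr0T.1
    have hr0δ : δ ≤ r0 := by
      by_contra h
      push_neg at h
      exact absurd hr0T.2 (not_le.mpr (hS1 r0 ⟨hr0pos, h⟩).2)
    have hmid : ∀ s, 0 < s → s < r0 → 0 < B2 s := by
      intro s hs hsr
      rcases lt_or_ge s δ with h | h
      · exact (hS1 s ⟨hs, h⟩).2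
      · by_contra hle
        push_neg at hle
        have hsT : s ∈ T := ⟨by simp only [mem_setOf_eq]; linarith, hle⟩
        exact absurd (csInf_le hbdd hsT) (not_le.mpr hsr)
    have hB20 : B2 r0 = 0 := by
      refine le_antisymm hr0T.2 ?_
      have tend : Tendsto B2 (nhdsWithin r0 (Iio r0)) (nhds (B2 r0)) :=
        (hB2c.continuous.tendsto r0).mono_left nhdsWithin_le_nhds
      refine ge_of_tendsto tend ?_
      filter_upwards [Ioo_mem_nhdsLT_of_mem
        (show r0 ∈ Ioc (0:ℝ) r0 from ⟨hr0pos, le_refl r0⟩)] with s hs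
      exact le_of_lt (hmid s hs.1 hs.2)
    have hBδ2 : 1 < B (δ/2) := (hS1 (δ/2) ⟨by linarith, by linarith⟩).1
    have hmono : StrictMonoOn B (Icc (δ/2) r0) := by
      apply strictMonoOn_of_deriv_pos (convex_Icc _ _) (hBc.continuous.continuousOn)
      intro x hx
      rw [interior_Icc] at hx
      rw [(hBH x).deriv]
      exact hmid x (by linarith [hx.1]) hx.2
    have hBr0 : 1 < B r0 := by
      have h1 : B (δ/2) < B r0 :=
        hmono ⟨le_refl _, by linarith⟩ ⟨by linarith, le_refl _⟩ (by linarith)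
      linarith
    have hbr0 : 0 < b r0 := (hODE r0 hr0pos).1
    have hG2r0 : G2 r0 = 0 := by
      rw [(hODE r0 hr0pos).2.1, hB20]
      simp
    -- derivative of B2 at r0
    have h1 : HasDerivAt (fun x => G x * B x) (G2 r0 * B r0 + G r0 * B2 r0) r0 :=
      (hGH r0).mul (hBH r0)
    have h2 : HasDerivAt (fun x => (B x)^2) (2 * B r0 * B2 r0) r0 := by
      have := (hBH r0).fun_pow 2
      norm_num at this
      exact this
    have h3 : HasDerivAt (fun x => 1 - (B x)^2) (-(2 * B r0 * B2 r0)) r0 := by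
      simpa using (hasDerivAt_const r0 (1:ℝ)).fun_sub h2
    have h4 := h3.div (hbH r0) (ne_of_gt hbr0)
    have hW := h1.add h4
    have hev : B2 =ᶠ[nhds r0] fun x => G x * B x + (1 - (B x)^2) / b x := by
      filter_upwards [Ioi_mem_nhds hr0pos] with s hs
      exact (hODE s hs).2.2
    have hB2der : HasDerivAt B2
        (G2 r0 * B r0 + G r0 * B2 r0 +
          (-(2 * B r0 * B2 r0) * b r0 - (1 - B r0 ^ 2) * B r0) / b r0 ^ 2) r0 :=
      hW.congr_of_eventuallyEq hev
    have hval : G2 r0 * B r0 + G r0 * B2 r0 +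
        (-(2 * B r0 * B2 r0) * b r0 - (1 - B r0 ^ 2) * B r0) / b r0 ^ 2
        = ((B r0)^2 - 1) * B r0 / (b r0)^2 := by
      rw [hB20, hG2r0]
      ring
    rw [hval] at hB2der
    have hdpos : 0 < ((B r0)^2 - 1) * B r0 / (b r0)^2 := by
      apply div_pos (by nlinarith) (by positivity)
    have hslope : Tendsto (slope B2 r0) (nhdsWithin r0 (Iio r0))
        (nhds (((B r0)^2 - 1) * B r0 / (b r0)^2)) :=
      (hasDerivAt_iff_tendsto_slope.mp hB2der).mono_left
        (nhdsWithin_mono r0 (fun x hx => ne_of_lt hx))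
    have hle : ((B r0)^2 - 1) * B r0 / (b r0)^2 ≤ 0 := by
      refine le_of_tendsto hslope ?_
      filter_upwards [Ioo_mem_nhdsLT_of_mem
        (show r0 ∈ Ioc (0:ℝ) r0 from ⟨hr0pos, le_refl r0⟩)] with s hs
      rw [slope_def_field, hB20, sub_zero]
      exact div_nonpos_of_nonneg_of_nonpos (le_of_lt (hmid s hs.1 hs.2)) (by linarith [hs.2])
    linarith
  -- E1': B > 1 on (0, ∞)
  have hB1 : ∀ r, 0 < r → 1 < B r := by
    intro r hr
    rcases lt_or_ge r δ with h | h
    · exact (hS1 r ⟨hr, h⟩).1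
    · have hmono : StrictMonoOn B (Icc (δ/2) r) := by
        apply strictMonoOn_of_deriv_pos (convex_Icc _ _) (hBc.continuous.continuousOn)
        intro x hx
        rw [interior_Icc] at hx
        rw [(hBH x).deriv]
        exact hB2pos x (by linarith [hx.1])
      have h1 := hmono ⟨le_refl _, by linarith⟩ ⟨by linarith, le_refl _⟩ (by linarith)
      have h2 : 1 < B (δ/2) := (hS1 (δ/2) ⟨by linarith, by linarith⟩).1
      linarith
  -- linear growth of b
  have hbgrow : ∀ s r, 0 < s → s < r → b s + (r - s) ≤ b r := by
    intro s r hs hsr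
    obtain ⟨c, hc, hceq⟩ := exists_hasDerivAt_eq_slope b B hsr
      (hbd.continuous.continuousOn) (fun x _ => hbH x)
    have hc1 : 1 < B c := hB1 c (by linarith [hc.1])
    rw [eq_div_iff (ne_of_gt (by linarith : (0:ℝ) < r - s))] at hceq
    nlinarith
  have hG2eq : ∀ x, 0 < x → G2 x = 2 * B2 x / b x := fun x hx => (hODE x hx).2.1
  set r2 := δ/2 with hr2def
  have hr2pos : 0 < r2 := by rw [hr2def]; linarith
  have hGmono : MonotoneOn G (Ici r2) := by
    apply mono_Ici hr2pos (fun x _ => hGH x)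
    intro x hx
    have hx0 : 0 < x := by linarith
    rw [hG2eq x hx0]
    have h1 := hB2pos x hx0
    have h2 := (hODE x hx0).1
    positivity
  set m := G r2 with hmdef
  have hm : 0 < m := by
    have he := (hODE r2 hr2pos).2.2
    have hb2 := (hODE r2 hr2pos).1
    have hb1 := hB1 r2 hr2pos
    have hb2pos := hB2pos r2 hr2pos
    have h1 : (1 - (B r2)^2)/b r2 < 0 :=
      div_neg_of_neg_of_pos (by nlinarith) hb2
    have h2 : 0 < G r2 * B r2 := by linarith
    by_contra hle
    push_neg at hle
    have h3 : G r2 * B r2 ≤ 0 := mul_nonpos_of_nonpos_of_nonneg hle (by linarith)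
    linarith
  -- the function z
  set z : ℝ → ℝ := fun r => b r * G r - 2 * B r with hzdef
  have hzH : ∀ r, 0 < r → HasDerivAt z (B r * G r) r := by
    intro r hr
    have h1 : HasDerivAt (fun x => b x * G x) (B r * G r + b r * G2 r) r :=
      (hbH r).mul (hGH r)
    have h2 : HasDerivAt (fun x => 2 * B x) (2 * B2 r) r := (hBH r).const_mul 2
    have h3 := h1.sub h2
    have hb0 : b r ≠ 0 := ne_of_gt (hODE r hr).1
    have heq : B r * G r + b r * G2 r - 2 * B2 r = B r * G r := by
      rw [hG2eq r hr]
      field_simp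
      ring
    rw [heq] at h3
    exact h3
  -- z grows without bound
  have hzgrow : ∀ R, r2 ≤ R → z r2 + m * (b R - b r2) ≤ z R := by
    intro R hR
    have hmon : MonotoneOn (fun r => z r - m * b r) (Ici r2) := by
      apply mono_Ici hr2pos
      · intro x hx
        exact (hzH x (by linarith)).sub ((hbH x).const_mul m)
      · intro x hx
        have hGx : m ≤ G x := hGmono (mem_Ici.mpr le_rfl) (mem_Ici.mpr hx) hx
        have hBx : 1 < B x := hB1 x (by linarith)
        nlinarith
    have := hmon (mem_Ici.mpr le_rfl) (mem_Ici.mpr hR) hR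
    simp only at this
    linarith
  set r4 := r2 + (|z r2| + 1)/m with hr4def
  have hr2r4 : r2 < r4 := by
    have : 0 < (|z r2| + 1)/m := div_pos (by positivity) hm
    rw [hr4def]; linarith
  have hr4pos : 0 < r4 := by linarith
  have hz4 : 1 ≤ z r4 := by
    have h1 := hzgrow r4 (le_of_lt hr2r4)
    have h2 := hbgrow r2 r4 hr2pos hr2r4
    have h4 : m * (r4 - r2) = |z r2| + 1 := by
      rw [hr4def]
      field_simp
      ring
    have h5 : m * (r4 - r2) ≤ m * (b r4 - b r2) :=
      mul_le_mul_of_nonneg_left (by linarith) (le_of_lt hm)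
    nlinarith [abs_nonneg (z r2), neg_abs_le (z r2)]
  have hbr4 : 0 < b r4 := (hODE r4 hr4pos).1
  set η := z r4 / b r4 with hηdef
  have hη : 0 < η := div_pos (by linarith) hbr4
  -- z/b is monotone
  have hζmono : MonotoneOn (fun r => z r / b r) (Ici r4) := by
    apply mono_Ici hr4pos (F' := fun r => 2 * (B r / b r)^2)
    · intro x hx
      have hx0 : 0 < x := lt_trans (half_pos hr4pos) hx
      have hb0 : b x ≠ 0 := ne_of_gt (hODE x hx0).1
      have h1 := (hzH x hx0).div (hbH x) hb0
      have hzx : z x = b x * G x - 2 * B x := by rw [hzdef]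
      have heq : (B x * G x * b x - z x * B x) / (b x)^2 = 2 * (B x / b x)^2 := by
        rw [hzx]
        field_simp
        ring
      rw [heq] at h1
      exact h1
    · intro x _
      positivity
  have hzηb : ∀ r, r4 ≤ r → η * b r ≤ z r := by
    intro r hr
    have h1 : η ≤ z r / b r := by
      have := hζmono (mem_Ici.mpr le_rfl) (mem_Ici.mpr hr) hr
      rw [hηdef]
      simpa using this
    have hbr : 0 < b r := (hODE r (by linarith)).1
    calc η * b r ≤ (z r / b r) * b r := mul_le_mul_of_nonneg_right h1 (le_of_lt hbr)
      _ = z r := by field_simp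
  -- logarithmic comparison function
  set w : ℝ → ℝ := fun r => Real.log (B r) - Real.log (b r) - η * r with hwdef
  have hwH : ∀ x, 0 < x → HasDerivAt w (B2 x / B x - B x / b x - η) x := by
    intro x hx
    have hBx : 0 < B x := lt_trans one_pos (hB1 x hx)
    have hbx : 0 < b x := (hODE x hx).1
    have h1 : HasDerivAt (fun y => Real.log (B y)) (B2 x / B x) x :=
      (hBH x).log (ne_of_gt hBx)
    have h2 : HasDerivAt (fun y => Real.log (b y)) (B x / b x) x :=
      (hbH x).log (ne_of_gt hbx)
    have h3 : HasDerivAt (fun y : ℝ => η * y) η x := by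
      simpa using (hasDerivAt_id x).const_mul η
    exact (h1.sub h2).sub h3
  have hwmono : MonotoneOn w (Ici r4) := by
    apply mono_Ici hr4pos (fun x hx => hwH x ((half_pos hr4pos).trans hx))
    intro x hx
    have hx0 : 0 < x := by linarith
    have hBx1 : 1 < B x := hB1 x hx0
    have hBx : 0 < B x := by linarith
    have hbx : 0 < b x := (hODE x hx0).1
    have hzx : η * b x ≤ z x := hzηb x hx
    have hGxb : G x * b x = z x + 2 * B x := by rw [hzdef]; ring
    have hGx : η + 2 * (B x / b x) ≤ G x := by
      have hGeq : G x = (z x + 2 * B x) / b x := by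
        rw [eq_div_iff (ne_of_gt hbx)]
        exact hGxb
      rw [hGeq, le_div_iff₀ hbx]
      have he : (η + 2 * (B x / b x)) * b x = η * b x + 2 * B x := by
        field_simp
      rw [he]
      linarith
    have hODEx := (hODE x hx0).2.2
    have hkey : (η + B x / b x) * B x ≤ B2 x := by
      rw [hODEx]
      have h5 : (η + 2 * (B x / b x)) * B x ≤ G x * B x :=
        mul_le_mul_of_nonneg_right hGx (le_of_lt hBx)
      have h7 : 0 < 1 / b x := by positivity
      have e1 : (η + 2 * (B x / b x)) * B x = η * B x + 2 * ((B x)^2 / b x) := by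
        field_simp
      have e2 : (η + B x / b x) * B x = η * B x + (B x)^2 / b x := by
        field_simp
      have e3 : (1 - (B x)^2)/b x = 1/b x - (B x)^2 / b x := by ring
      linarith [e1 ▸ h5]
    have hfin : η + B x / b x ≤ B2 x / B x := by
      rw [le_div_iff₀ hBx]
      linarith
    linarith
  have hwr : ∀ r, r4 ≤ r → w r4 + η * r ≤ Real.log (B r) - Real.log (b r) := by
    intro r hr
    have h1 := hwmono (mem_Ici.mpr le_rfl) (mem_Ici.mpr hr) hr
    simp only [hwdef] at h1 ⊢
    linarith
  -- curvature bound gives an upper bound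
  set D := 1/(b r4)^2 + C with hDdef
  have hD : 0 < D := by positivity
  have hbound : ∀ r, r4 ≤ r → Real.log (B r) - Real.log (b r) ≤ Real.log (Real.sqrt D) := by
    intro r hr
    have hr0 : 0 < r := by linarith
    have hbr : 0 < b r := (hODE r hr0).1
    have hBr : 0 < B r := lt_trans one_pos (hB1 r hr0)
    have hbb : b r4 ≤ b r := by
      rcases eq_or_lt_of_le hr with h | h
      · rw [h]
      · linarith [hbgrow r4 r hr4pos h]
    have hcurv2 := (hC r hr0).2
    have h1 : (B r)^2 - 1 ≤ C * (b r)^2 := by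
      have h2 : -((1 - (B r)^2) / (b r)^2) ≤ C := le_trans (neg_le_abs _) hcurv2
      have h3 : ((B r)^2 - 1)/(b r)^2 ≤ C := by
        have he : ((B r)^2 - 1)/(b r)^2 = -((1 - (B r)^2) / (b r)^2) := by ring
        rw [he]; exact h2
      calc (B r)^2 - 1 = ((B r)^2 - 1)/(b r)^2 * (b r)^2 := by field_simp
        _ ≤ C * (b r)^2 := mul_le_mul_of_nonneg_right h3 (by positivity)
    have h4 : (B r / b r)^2 ≤ D := by
      rw [div_pow, div_le_iff₀ (by positivity), hDdef]
      have h6 : (b r4)^2 ≤ (b r)^2 := pow_le_pow_left₀ (le_of_lt hbr4) hbb 2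
      have h7 : 1 ≤ (b r)^2 / (b r4)^2 := (one_le_div (by positivity)).mpr h6
      have he : (1/(b r4)^2 + C) * (b r)^2 = (b r)^2/(b r4)^2 + C * (b r)^2 := by
        field_simp
      rw [he]
      linarith
    have h8 : B r / b r ≤ Real.sqrt D := by
      rw [← Real.sqrt_sq (le_of_lt (div_pos hBr hbr))]
      exact Real.sqrt_le_sqrt h4
    have h9 : Real.log (B r) - Real.log (b r) = Real.log (B r / b r) :=
      (Real.log_div (ne_of_gt hBr) (ne_of_gt hbr)).symm
    rw [h9]
    exact Real.log_le_log (div_pos hBr hbr) h8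
  set M := Real.log (Real.sqrt D) - w r4 with hMdef
  have hMb : ∀ r, r4 ≤ r → η * r ≤ M := by
    intro r hr
    have h1 := hwr r hr
    have h2 := hbound r hr
    rw [hMdef]
    linarith
  have hcontr := hMb (max r4 ((M + 1)/η)) (le_max_left _ _)
  have h10 : η * ((M + 1)/η) ≤ η * max r4 ((M + 1)/η) :=
    mul_le_mul_of_nonneg_left (le_max_right _ _) (le_of_lt hη)
  rw [mul_div_cancel₀ _ (ne_of_gt hη)] at h10
  linarith



theorem bryant_ode_positive_alpha_singular (a f : ℝ → ℝ) (α : ℝ) (hα : 0 < α)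
    (ha : ContDiff ℝ ⊤ a) (hf : ContDiff ℝ ⊤ f)
    (haexp : (fun r => a r - (r + α * r ^ 3)) =O[nhds (0 : ℝ)] fun r => r ^ 5)
    (hfexp : (fun r => deriv f r - 12 * α * r) =O[nhds (0 : ℝ)] fun r => r ^ 3)
    (δ₀ : ℝ) (hδ₀ : 0 < δ₀)
    (hsol : ∀ r ∈ Ioo 0 δ₀,
        0 < a r ∧
        deriv (deriv f) r = 2 * deriv (deriv a) r / a r ∧
        deriv (deriv a) r
          = deriv f r * deriv a r + (1 - (deriv a r) ^ 2) / a r) :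
    -- (i) a' > 1 and f' > 0 near the origin
    (∃ δ > 0, ∀ r ∈ Ioo 0 δ, 1 < deriv a r ∧ 0 < deriv f r) ∧
    -- (ii) no extension to a nonsingular global solution with a > 0 and
    -- bounded curvature
    (¬ ∃ b g : ℝ → ℝ, ContDiff ℝ ⊤ b ∧ ContDiff ℝ ⊤ g ∧
        (∃ ε > 0, ∀ r ∈ Ioo 0 ε, b r = a r ∧ g r = f r) ∧
        (∀ r > 0, 0 < b r ∧
          deriv (deriv g) r = 2 * deriv (deriv b) r / b r ∧
          deriv (deriv b) r
            = deriv g r * deriv b r + (1 - (deriv b r) ^ 2) / b r) ∧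
        (∃ C : ℝ, ∀ r > 0,
          |deriv (deriv b) r / b r| ≤ C ∧
          |(1 - (deriv b r) ^ 2) / (b r) ^ 2| ≤ C)) ∧
    -- (iii) only α' < 0 yields solutions on all of [0, ∞):
    (∀ b g : ℝ → ℝ, ∀ α' : ℝ, α' ≠ 0 →
        ContDiff ℝ ⊤ b → ContDiff ℝ ⊤ g →
        ((fun r => b r - (r + α' * r ^ 3)) =O[nhds (0 : ℝ)] fun r => r ^ 5) →
        (∀ r > 0, 0 < b r ∧
          deriv (deriv g) r = 2 * deriv (deriv b) r / b r ∧
          deriv (deriv b) r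
            = deriv g r * deriv b r + (1 - (deriv b r) ^ 2) / b r) →
        (∃ C : ℝ, ∀ r > 0,
          |deriv (deriv b) r / b r| ≤ C ∧
          |(1 - (deriv b r) ^ 2) / (b r) ^ 2| ≤ C) →
        α' < 0) := by
  obtain ⟨δa, hδa, hS1a⟩ := localS1 hα (ha.of_le le_top) haexp
  refine ⟨?_, ?_, ?_⟩
  · -- part (i)
    have hfo : (fun r => deriv f r - 12 * α * r) =o[nhds (0:ℝ)] fun r => r ^ 1 :=
      hfexp.trans_isLittleO (pow_littleO (by norm_num))
    have ev := isLittleO_iff.mp hfo (show (0:ℝ) < 6 * α by positivity)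
    rcases Metric.eventually_nhds_iff.mp ev with ⟨δf, hδf, Hf⟩
    refine ⟨min δa δf, lt_min hδa hδf, fun r hr => ?_⟩
    obtain ⟨hr0, hrδ⟩ := hr
    refine ⟨(hS1a r ⟨hr0, lt_of_lt_of_le hrδ (min_le_left _ _)⟩).1, ?_⟩
    have hd : dist r 0 < δf := by
      rw [Real.dist_eq, sub_zero, abs_of_pos hr0]
      exact lt_of_lt_of_le hrδ (min_le_right _ _)
    have h1 := Hf hd
    rw [Real.norm_eq_abs, Real.norm_eq_abs, abs_pow, abs_of_pos hr0] at h1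
    have h2 := (abs_le.mp h1).1
    nlinarith [mul_pos hα hr0]
  · -- part (ii)
    rintro ⟨b, g, hbs, hgs, ⟨ε, hε, hmatch⟩, hODEb, hcurvb⟩
    have hev : ∀ r ∈ Ioo (0:ℝ) ε, deriv b r = deriv a r := by
      intro r hr
      have h1 : b =ᶠ[nhds r] a := by
        filter_upwards [isOpen_Ioo.mem_nhds hr] with s hs
        exact (hmatch s hs).1
      exact h1.deriv_eq
    have hev2 : ∀ r ∈ Ioo (0:ℝ) ε, deriv (deriv b) r = deriv (deriv a) r := by
      intro r hr
      have h1 : deriv b =ᶠ[nhds r] deriv a := by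
        filter_upwards [isOpen_Ioo.mem_nhds hr] with s hs
        exact hev s hs
      exact h1.deriv_eq
    refine engine (hbs.of_le le_top) (hgs.of_le le_top)
      (lt_min hδa hε) (fun r hr => ?_) hODEb hcurvb
    obtain ⟨hr0, hrδ⟩ := hr
    have hra : r ∈ Ioo (0:ℝ) δa := ⟨hr0, lt_of_lt_of_le hrδ (min_le_left _ _)⟩
    have hrε : r ∈ Ioo (0:ℝ) ε := ⟨hr0, lt_of_lt_of_le hrδ (min_le_right _ _)⟩
    rw [hev r hrε, hev2 r hrε]
    exact hS1a r hra
  · -- part (iii)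
    intro b g α' hne hbs hgs hexp hODEb hcurvb
    rcases lt_trichotomy α' 0 with h | h | h
    · exact h
    · exact absurd h hne
    · exfalso
      obtain ⟨δb, hδb, hS1b⟩ := localS1 h (hbs.of_le le_top) hexp
      exact engine (hbs.of_le le_top) (hgs.of_le le_top) hδb hS1b hODEb hcurvb
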